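/- Let p : ℝ^n → [1, ∞) be measurable, Q a cube, h, x as above, and 0 < γ ≤ 1. Define f₃(y+h) := f(y+h)·1_{{|f(y+h)| ≤ 1, p(y+h) > p(x)}}(y) and 1/q(x,y,h) := max(1/p(x) − 1/p(y+h), 0). Then ( (γ/|Q|) ∫_Q |f₃(y+h)| dy )^{p(x)} ≤ (1/|Q|) ∫_Q ( |f(y+h)|^{p(y+h)} + γ^{q(x,y,h)} ) dy. -/

import Mathlib

open MeasureTheory ENNReal

/-- `Q ⊆ ℝⁿ` is an (axis-parallel, closed) cube. -/
def IsCube {n : ℕ} (Q : Set (EuclideanSpace ℝ (Fin n))) : Prop :=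
  ∃ (a : EuclideanSpace ℝ (Fin n)) (ℓ : ℝ), 0 < ℓ ∧
    Q = {x | ∀ i, a i ≤ x i ∧ x i ≤ a i + ℓ}

/-- `γ^e` for a real `γ > 0` and an extended-real exponent `e`, with the convention
`γ^∞ = 0`. -/
noncomputable def gammaPow (γ : ℝ) (e : ℝ≥0∞) : ℝ≥0∞ :=
  if e = ⊤ then 0 else ENNReal.ofReal (γ ^ e.toReal)

private lemma young_aux {c P t γ : ℝ} (hc : 1 ≤ c) (hcP : c < P) (ht0 : 0 ≤ t)
    (hγ0 : 0 < γ) :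
    (γ * t) ^ c ≤ t ^ P + γ ^ ((1 / c - 1 / P)⁻¹) := by
  have hc0 : 0 < c := lt_of_lt_of_le one_pos hc
  have hP0 : 0 < P := hc0.trans hcP
  have hPc : 0 < P - c := by linarith
  set θ : ℝ := c / P with hθdef
  have hθ0 : 0 ≤ θ := le_of_lt (div_pos hc0 hP0)
  have hθ1 : θ ≤ 1 := le_of_lt ((div_lt_one hP0).2 hcP)
  set qr : ℝ := (1 / c - 1 / P)⁻¹ with hqrdef
  have hqr : qr = c * P / (P - c) := by
    rw [hqrdef, show 1 / c - 1 / P = (P - c) / (c * P) by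
      field_simp, inv_div]
  have ht : t ^ c = (t ^ P) ^ θ := by
    rw [← Real.rpow_mul ht0]
    congr 1
    rw [hθdef]; field_simp
  have hγ : γ ^ c = (γ ^ qr) ^ (1 - θ) := by
    rw [← Real.rpow_mul hγ0.le]
    congr 1
    rw [hqr, hθdef]
    field_simp
  have h1 : (γ * t) ^ c = (t ^ P) ^ θ * (γ ^ qr) ^ (1 - θ) := by
    rw [Real.mul_rpow hγ0.le ht0, ← ht, ← hγ]; ring
  have h2 := Real.geom_mean_le_arith_mean2_weighted (w₁ := θ) (w₂ := 1 - θ)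
    (p₁ := t ^ P) (p₂ := γ ^ qr) hθ0 (by linarith)
    (Real.rpow_nonneg ht0 P) (Real.rpow_nonneg hγ0.le qr) (by ring)
  have h3 : θ * t ^ P + (1 - θ) * γ ^ qr ≤ t ^ P + γ ^ qr := by
    have ha := Real.rpow_nonneg ht0 P
    have hb := Real.rpow_nonneg hγ0.le qr
    nlinarith
  calc (γ * t) ^ c = (t ^ P) ^ θ * (γ ^ qr) ^ (1 - θ) := h1
    _ ≤ θ * (t ^ P) + (1 - θ) * (γ ^ qr) := h2
    _ ≤ t ^ P + γ ^ qr := h3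

theorem average_f3_rpow_le (n : ℕ) (p : EuclideanSpace ℝ (Fin n) → ℝ)
    (hp : ∀ x, 1 ≤ p x) (hpm : Measurable p)
    (Q : Set (EuclideanSpace ℝ (Fin n))) (hQ : IsCube Q)
    (h x : EuclideanSpace ℝ (Fin n)) (hx : x ∈ Q)
    (γ : ℝ) (hγ0 : 0 < γ) (hγ1 : γ ≤ 1)
    (f : EuclideanSpace ℝ (Fin n) → ℝ) (hf : Measurable f) :
    (ENNReal.ofReal γ * (volume Q)⁻¹ * ∫⁻ y in Q, ENNReal.ofReal
        (|({y | |f (y + h)| ≤ 1 ∧ p x < p (y + h)}.indicator (fun y => f (y + h))) y|))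
      ^ p x
      ≤ (volume Q)⁻¹ * ∫⁻ y in Q,
          (ENNReal.ofReal (|f (y + h)| ^ p (y + h)) +
            gammaPow γ (ENNReal.ofReal (max (1 / p x - 1 / p (y + h)) 0))⁻¹) := by
  classical
  have hm1 : Measurable fun y : EuclideanSpace ℝ (Fin n) => f (y + h) :=
    hf.comp (measurable_add_const h)
  have hm2 : Measurable fun y : EuclideanSpace ℝ (Fin n) => p (y + h) :=
    hpm.comp (measurable_add_const h)
  set S : Set (EuclideanSpace ℝ (Fin n)) := {y | |f (y + h)| ≤ 1 ∧ p x < p (y + h)} with hSdef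
  have hS : MeasurableSet S :=
    (measurableSet_le hm1.abs measurable_const).inter (measurableSet_lt measurable_const hm2)
  have hind : Measurable (S.indicator fun y => f (y + h)) := hm1.indicator hS
  set c : ℝ := p x with hcdef
  have hc1 : 1 ≤ c := hp x
  have hc0 : 0 < c := lt_of_lt_of_le one_pos hc1
  -- volume facts
  have hvolpos : 0 < volume Q ∧ volume Q < ⊤ := by
    obtain ⟨a, ℓ, hℓ, rfl⟩ := hQ
    have hpre : {x : EuclideanSpace ℝ (Fin n) | ∀ i, a i ≤ x i ∧ x i ≤ a i + ℓ} =
        (MeasurableEquiv.toLp 2 (Fin n → ℝ)).symm ⁻¹'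
          (Set.univ.pi fun i => Set.Icc (a i) (a i + ℓ)) := by
      ext y
      simp [MeasurableEquiv.toLp, Set.mem_pi, Set.mem_Icc, Pi.le_def,
        forall_and]
      exact Iff.rfl
    rw [hpre, (EuclideanSpace.volume_preserving_symm_measurableEquiv_toLp (Fin n)).measure_preimage
        (MeasurableSet.univ_pi fun i => measurableSet_Icc).nullMeasurableSet,
      volume_pi_pi]
    simp only [Real.volume_Icc, add_sub_cancel_left, Finset.prod_const, Finset.card_univ,
      Fintype.card_fin]
    refine ⟨ENNReal.pow_pos (ENNReal.ofReal_pos.2 hℓ) n, ENNReal.pow_lt_top ofReal_lt_top⟩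
  set μ : Measure (EuclideanSpace ℝ (Fin n)) := (volume Q)⁻¹ • volume.restrict Q with hμdef
  haveI : IsProbabilityMeasure μ := by
    constructor
    rw [hμdef, Measure.smul_apply, smul_eq_mul, Measure.restrict_apply_univ]
    exact ENNReal.inv_mul_cancel hvolpos.1.ne' hvolpos.2.ne
  set g : EuclideanSpace ℝ (Fin n) → ℝ :=
    fun y => γ * |S.indicator (fun y => f (y + h)) y| with hgdef
  have hg : Measurable g := hind.abs.const_mul γ
  have hg0 : ∀ y, 0 ≤ g y := fun y => mul_nonneg hγ0.le (abs_nonneg _)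
  have hnn : ∀ y, (‖g y‖₊ : ℝ≥0∞) = ENNReal.ofReal (g y) := fun y => by
    rw [← enorm_eq_nnnorm, ← ofReal_norm, Real.norm_of_nonneg (hg0 y)]
  -- Step A : rewrite LHS as an integral over the probability measure μ
  have stepA : ENNReal.ofReal γ * (volume Q)⁻¹ * (∫⁻ y in Q, ENNReal.ofReal
      (|(S.indicator fun y => f (y + h)) y|)) = ∫⁻ y, ENNReal.ofReal (g y) ∂μ := by
    rw [hμdef, lintegral_smul_measure]
    have : ∀ y, ENNReal.ofReal (g y) =
        ENNReal.ofReal γ * ENNReal.ofReal (|(S.indicator fun y => f (y + h)) y|) := fun y => by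
      rw [hgdef, ENNReal.ofReal_mul hγ0.le]
    simp only [this]
    rw [lintegral_const_mul _ (hind.abs.ennreal_ofReal)]
    ring
  -- Step B : Jensen's inequality
  have stepB : (∫⁻ y, ENNReal.ofReal (g y) ∂μ) ^ c ≤
      ∫⁻ y, (ENNReal.ofReal (g y)) ^ c ∂μ := by
    have hcle : (1 : ℝ≥0∞) ≤ ENNReal.ofReal c := by
      simpa using ENNReal.ofReal_le_ofReal hc1
    have key := eLpNorm_le_eLpNorm_of_exponent_le (μ := μ) (f := g) hcle
      hg.aestronglyMeasurable
    rw [eLpNorm_one_eq_lintegral_enorm, eLpNorm_eq_lintegral_rpow_enorm_toReal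
      (ENNReal.ofReal_pos.2 hc0).ne' ofReal_ne_top, ENNReal.toReal_ofReal hc0.le] at key
    simp only [enorm_eq_nnnorm, hnn] at key
    calc (∫⁻ y, ENNReal.ofReal (g y) ∂μ) ^ c
        ≤ ((∫⁻ y, (ENNReal.ofReal (g y)) ^ c ∂μ) ^ (1 / c)) ^ c :=
          ENNReal.rpow_le_rpow key hc0.le
      _ = ∫⁻ y, (ENNReal.ofReal (g y)) ^ c ∂μ := by
          rw [← ENNReal.rpow_mul, one_div, inv_mul_cancel₀ hc0.ne', ENNReal.rpow_one]
  -- Step C : pointwise bound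
  have stepC : ∀ y, (ENNReal.ofReal (g y)) ^ c ≤
      ENNReal.ofReal (|f (y + h)| ^ p (y + h)) +
        gammaPow γ (ENNReal.ofReal (max (1 / c - 1 / p (y + h)) 0))⁻¹ := by
    intro y
    by_cases hy : y ∈ S
    · obtain ⟨ht1, hcP⟩ := hy
      have hP0 : 0 < p (y + h) := hc0.trans hcP
      have hpos : 0 < 1 / c - 1 / p (y + h) := by
        have := one_div_lt_one_div_of_lt hc0 hcP
        linarith
      have hmax : max (1 / c - 1 / p (y + h)) 0 = 1 / c - 1 / p (y + h) :=
        max_eq_left hpos.le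
      have he0 : ENNReal.ofReal (1 / c - 1 / p (y + h)) ≠ 0 :=
        (ENNReal.ofReal_pos.2 hpos).ne'
      have hgam : gammaPow γ (ENNReal.ofReal (max (1 / c - 1 / p (y + h)) 0))⁻¹ =
          ENNReal.ofReal (γ ^ ((1 / c - 1 / p (y + h))⁻¹)) := by
        rw [hmax, gammaPow, if_neg (ENNReal.inv_ne_top.2 he0)]
        congr 1
        rw [ENNReal.toReal_inv, ENNReal.toReal_ofReal hpos.le]
      have hgy : g y = γ * |f (y + h)| := by
        rw [hgdef]
        simp only [Set.indicator_of_mem (show y ∈ S from ⟨ht1, hcP⟩)]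
      rw [hgy, hgam, ENNReal.ofReal_rpow_of_nonneg (by positivity) hc0.le,
        ← ENNReal.ofReal_add (Real.rpow_nonneg (abs_nonneg _) _)
          (Real.rpow_nonneg hγ0.le _)]
      exact ENNReal.ofReal_le_ofReal (young_aux hc1 hcP (abs_nonneg _) hγ0)
    · have hgy : g y = 0 := by
        rw [hgdef]
        simp [Set.indicator_of_notMem hy]
      rw [hgy, ENNReal.ofReal_zero, ENNReal.zero_rpow_of_pos hc0]
      exact bot_le
  -- Assemble
  calc (ENNReal.ofReal γ * (volume Q)⁻¹ * ∫⁻ y in Q, ENNReal.ofReal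
        (|(S.indicator fun y => f (y + h)) y|)) ^ c
      = (∫⁻ y, ENNReal.ofReal (g y) ∂μ) ^ c := by rw [stepA]
    _ ≤ ∫⁻ y, (ENNReal.ofReal (g y)) ^ c ∂μ := stepB
    _ ≤ ∫⁻ y, (ENNReal.ofReal (|f (y + h)| ^ p (y + h)) +
          gammaPow γ (ENNReal.ofReal (max (1 / c - 1 / p (y + h)) 0))⁻¹) ∂μ :=
        lintegral_mono stepC
    _ = (volume Q)⁻¹ * ∫⁻ y in Q, (ENNReal.ofReal (|f (y + h)| ^ p (y + h)) +
          gammaPow γ (ENNReal.ofReal (max (1 / c - 1 / p (y + h)) 0))⁻¹) := by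
        rw [hμdef, lintegral_smul_measure, smul_eq_mul]
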